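/- Let (αₙ) be a sequence of positive reals with αₙ ≥ c·n for some c > 0 and all n ≥ 1, and let z be a complex number with -π/4 < arg(z) < π/4. Then the infinite product ∏ₙ (1 - z²/αₙ²)/(1 + z²/αₙ²) converges and its modulus is strictly less than 1. -/

import Mathlib

open Complex Real

theorem stmt1 (α : ℕ → ℝ) (c : ℝ) (hc : 0 < c)
    (hαpos : ∀ n, 0 < α n)
    (hgrow : ∀ n : ℕ, 1 ≤ n → c * n ≤ α n)
    (z : ℂ) (hz : z ≠ 0)
    (harg : -(Real.pi / 4) < z.arg ∧ z.arg < Real.pi / 4) :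
    Multipliable (fun n : ℕ =>
        (1 - z ^ 2 / (α n : ℂ) ^ 2) / (1 + z ^ 2 / (α n : ℂ) ^ 2)) ∧
    ‖(∏' n : ℕ,
        (1 - z ^ 2 / (α n : ℂ) ^ 2) / (1 + z ^ 2 / (α n : ℂ) ^ 2))‖ < 1 := by
  set f : ℕ → ℂ := fun n => (1 - z ^ 2 / (α n : ℂ) ^ 2) / (1 + z ^ 2 / (α n : ℂ) ^ 2) with hf
  set t : ℕ → ℂ := fun n => z ^ 2 / (α n : ℂ) ^ 2 with ht
  -- Re(z^2) > 0
  have habsz : 0 < ‖z‖ := norm_pos_iff.mpr hz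
  have hwre : 0 < (z ^ 2).re := by
    have hcos := Complex.cos_arg hz
    have hsin := Complex.sin_arg z
    have hc2 : 0 < Real.cos (2 * z.arg) := by
      apply Real.cos_pos_of_mem_Ioo
      constructor <;> [linarith [harg.1]; linarith [harg.2]]
    have hre2 : (z ^ 2).re = z.re ^ 2 - z.im ^ 2 := by
      simp [pow_two, Complex.mul_re]
    have hid : Real.cos (2 * z.arg) = Real.cos z.arg ^ 2 - Real.sin z.arg ^ 2 :=
      (Real.cos_two_mul' z.arg)
    have hre : z.re = ‖z‖ * Real.cos z.arg := by
      rw [hcos]; field_simp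
    have him : z.im = ‖z‖ * Real.sin z.arg := by
      rw [hsin]; field_simp
    rw [hre2, hre, him]
    have : (‖z‖ * Real.cos z.arg) ^ 2 - (‖z‖ * Real.sin z.arg) ^ 2
        = ‖z‖ ^ 2 * Real.cos (2 * z.arg) := by rw [hid]; ring
    rw [this]
    exact mul_pos (pow_pos habsz 2) hc2
  -- basic facts about t n
  have htval : ∀ n, t n = z ^ 2 / ((α n ^ 2 : ℝ) : ℂ) := by
    intro n; rw [ht]; push_cast; ring
  have htre : ∀ n, 0 < (t n).re := by
    intro n
    rw [htval n, Complex.div_ofReal_re]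
    exact div_pos hwre (pow_pos (hαpos n) 2)
  have hne : ∀ n, (1 + t n) ≠ 0 := by
    intro n h
    have := congrArg Complex.re h
    simp only [Complex.add_re, Complex.one_re, Complex.zero_re] at this
    linarith [htre n]
  have hdpos : ∀ n, 0 < ‖1 + t n‖ := fun n => norm_pos_iff.mpr (hne n)
  -- each factor has modulus < 1
  have habsf : ∀ n, ‖f n‖ < 1 := by
    intro n
    rw [hf]
    simp only
    rw [norm_div, div_lt_one (hdpos n)]
    rw [Complex.norm_def, Complex.norm_def]
    apply Real.sqrt_lt_sqrt (Complex.normSq_nonneg _)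
    simp only [Complex.normSq_apply, Complex.sub_re, Complex.sub_im, Complex.add_re,
      Complex.add_im, Complex.one_re, Complex.one_im]
    nlinarith [htre n]
  -- bound on f n - 1
  have hfsub : ∀ n, f n - 1 = (-2 * t n) / (1 + t n) := by
    intro n
    rw [hf]
    simp only
    rw [div_sub_one (hne n)]
    congr 1
    simp only [ht]
    ring
  have h1t : ∀ n, (1 : ℝ) ≤ ‖1 + t n‖ := by
    intro n
    have := Complex.re_le_norm (1 + t n)
    simp only [Complex.add_re, Complex.one_re] at this
    linarith [htre n]
  have hbound : ∀ n, ‖f n - 1‖ ≤ 2 * ‖t n‖ := by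
    intro n
    rw [hfsub n, norm_div, norm_mul]
    have h2 : ‖(-2 : ℂ)‖ = 2 := by simp
    rw [h2]
    calc 2 * ‖t n‖ / ‖1 + t n‖
        ≤ 2 * ‖t n‖ / 1 := by
          apply div_le_div_of_nonneg_left _ one_pos (h1t n)
          positivity
      _ = 2 * ‖t n‖ := by ring
  -- bound on abs (t n)
  have habst : ∀ n : ℕ, 1 ≤ n → ‖t n‖ ≤ ‖z ^ 2‖ / (c * n) ^ 2 := by
    intro n hn
    rw [htval n, norm_div, Complex.norm_real, Real.norm_eq_abs, abs_of_pos (pow_pos (hαpos n) 2)]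
    apply div_le_div_of_nonneg_left (norm_nonneg _)
    · positivity
    · have h1 : 0 < c * n := by positivity
      have := hgrow n hn
      nlinarith
  -- eventual log bound
  have htend : Filter.Tendsto (fun n : ℕ => (c * (n : ℝ)) ^ 2) Filter.atTop Filter.atTop :=
    (Filter.tendsto_pow_atTop two_ne_zero).comp
      (Filter.Tendsto.const_mul_atTop hc tendsto_natCast_atTop_atTop)
  have hev : ∀ᶠ n in Filter.atTop, ‖Complex.log (f n)‖ ≤
      (3 * ‖z ^ 2‖ / c ^ 2) * (1 / (n : ℝ) ^ 2) := by
    filter_upwards [Filter.eventually_ge_atTop 1,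
      htend.eventually_ge_atTop (4 * ‖z ^ 2‖)] with n hn1 hn4
    have hn1' : (1 : ℝ) ≤ (n : ℝ) := by exact_mod_cast hn1
    have hcn : (0 : ℝ) < (c * n) ^ 2 := by positivity
    have hb : ‖f n - 1‖ ≤ 2 * (‖z ^ 2‖ / (c * n) ^ 2) := by
      have h1 := hbound n
      have h2 := habst n hn1
      linarith
    have hquart : ‖z ^ 2‖ / (c * n) ^ 2 ≤ 1 / 4 := by
      rw [div_le_iff₀ hcn]; linarith
    have hhalf : ‖f n - 1‖ ≤ 1 / 2 := by
      linarith
    have hlog := Complex.norm_log_one_add_half_le_self hhalf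
    rw [add_sub_cancel] at hlog
    have heq : (3 * ‖z ^ 2‖ / c ^ 2) * (1 / (n : ℝ) ^ 2)
        = 3 * (‖z ^ 2‖ / (c * n) ^ 2) := by
      have hn0 : (n : ℝ) ≠ 0 := by linarith
      field_simp
    rw [heq]
    linarith
  have hgsum : Summable (fun n : ℕ => (3 * ‖z ^ 2‖ / c ^ 2) * (1 / (n : ℝ) ^ 2)) :=
    (Real.summable_one_div_nat_pow.mpr (le_refl 2)).mul_left _
  have hlogsum : Summable (fun n => Complex.log (f n)) :=
    Summable.of_norm_bounded_eventually_nat hgsum hev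
  by_cases h0 : ∃ m, f m = 0
  · obtain ⟨m, hm⟩ := h0
    have hp : HasProd f 0 := by
      have hzero : ∀ᶠ s in Filter.atTop, ∏ i ∈ s, f i = 0 := by
        filter_upwards [Filter.eventually_ge_atTop ({m} : Finset ℕ)] with s hs
        exact Finset.prod_eq_zero (hs (Finset.mem_singleton_self m)) hm
      exact Filter.Tendsto.congr' (Filter.EventuallyEq.symm hzero) tendsto_const_nhds
    refine ⟨hp.multipliable, ?_⟩
    rw [hp.tprod_eq]
    simp
  · push_neg at h0
    have hmult : Multipliable f :=
      Complex.multipliable_of_summable_log hlogsum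
    refine ⟨hmult, ?_⟩
    have hmap := hmult.map_tprod (normHom : ℂ →*₀ ℝ) continuous_norm
    have hmabs : Multipliable (fun n => ‖f n‖) :=
      hmult.map (normHom : ℂ →*₀ ℝ) continuous_norm
    have hle : ∏' n, ‖f n‖ ≤ ‖f 0‖ := by
      apply le_of_tendsto hmabs.hasProd
      filter_upwards [Filter.eventually_ge_atTop ({0} : Finset ℕ)] with s hs
      have h0s : 0 ∈ s := hs (Finset.mem_singleton_self 0)
      calc ∏ i ∈ s, ‖f i‖
          = ‖f 0‖ * ∏ i ∈ s.erase 0, ‖f i‖ :=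
            (Finset.mul_prod_erase s _ h0s).symm
        _ ≤ ‖f 0‖ * 1 := by
            apply mul_le_mul_of_nonneg_left _ (norm_nonneg _)
            exact Finset.prod_le_one (fun i _ => norm_nonneg _)
              (fun i _ => le_of_lt (habsf i))
        _ = ‖f 0‖ := mul_one _
    calc ‖∏' n, f n‖ = ∏' n, ‖f n‖ := hmap
      _ ≤ ‖f 0‖ := hle
      _ < 1 := habsf 0
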